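/- If T is a theory with quantifier elimination in a language L containing no atomic formula with more than m free variables, then T is m-distal (hence DR(T) ≤ m). In particular, if all function symbols of L are unary and all relation symbols have arity at most m ≥ 2, then DR(T) ≤ m. -/

import Mathlib

open FirstOrder Language Set

namespace DR

/-- A partial type over `M` in variables indexed by `β`: a set of formulas, each with
finitely many parameters from `M`. -/
abbrev PType (L : FirstOrder.Language) (M : Type) (β : Type) : Type _ :=
  Set ((k : ℕ) × (L.Formula (β ⊕ Fin k) × (Fin k → M)))

variable {M : Type}

/-- Two `β`-tuples have the same type over the parameter set `A`. -/
def EqTp (L : FirstOrder.Language) [L.Structure M] (A : Set M) {β : Type} (f g : β → M) : Prop :=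
  ∀ (k : ℕ) (a : Fin k → M), (∀ i, a i ∈ A) →
    ∀ φ : L.Formula (β ⊕ Fin k), φ.Realize (Sum.elim f a) ↔ φ.Realize (Sum.elim g a)

/-- All parameters of formulas in `p` lie in `D`. -/
def paramsIn {L : FirstOrder.Language} {β : Type} (D : Set M) (p : PType L M β) : Prop :=
  ∀ x ∈ p, ∀ i, x.2.2 i ∈ D

/-- The set of parameters appearing in `p`. -/
def paramSet {L : FirstOrder.Language} {β : Type} (p : PType L M β) : Set M :=
  ⋃ x ∈ p, Set.range x.2.2

/-- The tuple `f` realizes every formula of `p`. -/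
def realizes {L : FirstOrder.Language} [L.Structure M] {β : Type} (f : β → M)
    (p : PType L M β) : Prop :=
  ∀ x ∈ p, x.2.1.Realize (Sum.elim f x.2.2)

/-- `p` is finitely satisfiable by tuples with coordinates in `A`. -/
def finSatIn (L : FirstOrder.Language) [L.Structure M] (A : Set M) {β : Type}
    (p : PType L M β) : Prop :=
  ∀ s : Finset ((k : ℕ) × (L.Formula (β ⊕ Fin k) × (Fin k → M))), ↑s ⊆ p →
    ∃ f : β → M, (∀ i, f i ∈ A) ∧ ∀ x ∈ s, x.2.1.Realize (Sum.elim f x.2.2)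

/-- `p` is a complete (consistent) type over the parameter set `D`. -/
def isCompleteOver (L : FirstOrder.Language) [L.Structure M] (D : Set M) {β : Type}
    (p : PType L M β) : Prop :=
  paramsIn D p ∧ finSatIn L Set.univ p ∧
    ∀ (k : ℕ) (φ : L.Formula (β ⊕ Fin k)) (d : Fin k → M), (∀ i, d i ∈ D) →
      (⟨k, φ, d⟩ ∈ p ∨ ⟨k, φ.not, d⟩ ∈ p)

/-- `p` (a type with parameters in `D`) is invariant over `A`: membership of a formula depends
only on the type over `A` of its parameter tuple. -/
def invariantOver (L : FirstOrder.Language) [L.Structure M] (A D : Set M) {β : Type}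
    (p : PType L M β) : Prop :=
  ∀ (k : ℕ) (φ : L.Formula (β ⊕ Fin k)) (d d' : Fin k → M), (∀ i, d' i ∈ D) →
    EqTp L A d d' → ⟨k, φ, d⟩ ∈ p → ⟨k, φ, d'⟩ ∈ p

/-- The restriction of `p` to formulas with parameters in `S`. -/
def restrictParams {L : FirstOrder.Language} {β : Type} (S : Set M) (p : PType L M β) :
    PType L M β :=
  {x ∈ p | ∀ i, x.2.2 i ∈ S}

/-- `S` is `κ⁺`-saturated (realizes consistent types over parameter sets of size `≤ κ`). -/
def satIn (L : FirstOrder.Language) [L.Structure M] (S : Set M) (κ : Cardinal) : Prop :=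
  ∀ (n : ℕ) (p : PType L M (Fin n)), paramsIn S p → Cardinal.mk ↥(paramSet p) ≤ κ →
    finSatIn L Set.univ p → ∃ f : Fin n → M, (∀ i, f i ∈ S) ∧ realizes f p

/-- Saturation of the whole structure below the cardinal `κ` (in all small variable contexts). -/
def SatAll (L : FirstOrder.Language) (M : Type) [L.Structure M] (κ : Cardinal) : Prop :=
  ∀ (β : Type) (p : PType L M β), Cardinal.mk β < κ → Cardinal.mk ↥(paramSet p) < κ →
    finSatIn L Set.univ p → ∃ f : β → M, realizes f p

/-- `M` is a monster model: saturated in its own cardinality. -/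
def IsMonster (L : FirstOrder.Language) (M : Type) [L.Structure M] : Prop :=
  SatAll L M (Cardinal.mk M)

/-- The restriction of an `n`-type in tuple-variables to the sub-tuple of variables
selected by `σ`. -/
def restrictVars {L : FirstOrder.Language} {α : Type} {m n : ℕ} (σ : Fin m → Fin n)
    (p : PType L M (Fin n × α)) : PType L M (Fin m × α) :=
  {x | ⟨x.1, x.2.1.relabel (Sum.map (Prod.map σ id) id), x.2.2⟩ ∈ p}

/-- An `n`-type over `D` is `m`-determined if it is completely determined by the `m`-types
it contains among its variables. -/
def mDetermined (L : FirstOrder.Language) [L.Structure M] {α : Type} {n : ℕ} (m : ℕ)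
    (D : Set M) (p : PType L M (Fin n × α)) : Prop :=
  ∀ q : PType L M (Fin n × α), isCompleteOver L D q →
    (∀ σ : Fin m → Fin n, StrictMono σ → restrictVars σ q = restrictVars σ p) → q = p

/-- Flatten a finite tuple of `α`-tuples into a single tuple. -/
def tupcat {α : Type} {N : ℕ} (c : Fin N → α → M) : Fin N × α → M := fun x => c x.1 x.2

/-- The sequence `b` of `α`-tuples is indiscernible over `A`. -/
def indiscOver (L : FirstOrder.Language) [L.Structure M] (A : Set M) {ι α : Type}
    [LinearOrder ι] (b : ι → α → M) : Prop :=
  ∀ (N : ℕ) (f g : Fin N → ι), StrictMono f → StrictMono g →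
    EqTp L A (tupcat fun j => b (f j)) (tupcat fun j => b (g j))

/-- `T = Th(M)` is NIP: every formula has finite alternation rank on every
indiscernible sequence. -/
def IsNIP (L : FirstOrder.Language) (M : Type) [L.Structure M] : Prop :=
  ∀ (β ι : Type) [LinearOrder ι] (b : ι → β → M), indiscOver L ∅ b →
    ∀ (k : ℕ) (φ : L.Formula (β ⊕ Fin k)) (d : Fin k → M),
      ∃ N : ℕ, ∀ f : Fin (N + 1) → ι, StrictMono f →
        ∃ j : Fin N,
          (φ.Realize (Sum.elim (b (f j.castSucc)) d) ↔ φ.Realize (Sum.elim (b (f j.succ)) d))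

/-- The (global) limit type of a sequence: formulas eventually satisfied along the sequence. -/
def limTp (L : FirstOrder.Language) [L.Structure M] {ι : Type} [LinearOrder ι] (b : ι → M) :
    PType L M (Fin 1) :=
  {x | ∃ i₀ : ι, ∀ i ≥ i₀, x.2.1.Realize (Sum.elim (fun _ : Fin 1 => b i) x.2.2)}

/-- The product `p₀ ⊗ ⋯ ⊗ p_{n-1}` (resolved left to right) of global types invariant
over `A`, in singleton variables. -/
def nProd (L : FirstOrder.Language) [L.Structure M] (A : Set M) :
    (n : ℕ) → (Fin n → PType L M (Fin 1)) → PType L M (Fin n)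
  | 0, _ => {x | x.2.1.Realize (Sum.elim (fun v : Fin 0 => v.elim0) x.2.2)}
  | n + 1, ps =>
    {x | ∀ a : M,
      realizes (fun _ : Fin 1 => a) (restrictParams (A ∪ Set.range x.2.2) (ps 0)) →
      ⟨x.1 + 1,
        x.2.1.relabel (Sum.elim
          (fun v : Fin (n + 1) =>
            (Fin.cases (Sum.inr (Fin.last x.1)) (fun i => Sum.inl i) v : Fin n ⊕ Fin (x.1 + 1)))
          (fun j : Fin x.1 => Sum.inr j.castSucc)),
        Fin.snoc x.2.2 a⟩ ∈ nProd L A n (fun i => ps i.succ)}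

/-- `c` is (the left part of) a Dedekind cut: a nonempty proper lower set with no maximum,
whose complement has no minimum. -/
def IsDedekindCut {ι : Type} [LinearOrder ι] (c : Set ι) : Prop :=
  c.Nonempty ∧ cᶜ.Nonempty ∧ (∀ i ∈ c, ∀ j, j ≤ i → j ∈ c) ∧
    (∀ i ∈ c, ∃ j ∈ c, i < j) ∧ (∀ i ∈ cᶜ, ∃ j ∈ cᶜ, j < i)

/-- The strict order on the index extended by points inserted at the cuts `Lc`. -/
def insLT {ι η : Type} [LinearOrder ι] [LinearOrder η] (Lc : η → Set ι) :
    (ι ⊕ η) → (ι ⊕ η) → Prop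
  | Sum.inl i, Sum.inl j => i < j
  | Sum.inl i, Sum.inr e => i ∈ Lc e
  | Sum.inr e, Sum.inl i => i ∉ Lc e
  | Sum.inr e, Sum.inr e' => Lc e ⊂ Lc e' ∨ (Lc e = Lc e' ∧ e < e')

/-- The sequence `b` remains indiscernible over `A` after inserting the tuples `a e` for
`e ∈ S`, each at the cut `Lc e`. -/
def InsertsInd (L : FirstOrder.Language) [L.Structure M] (A : Set M) {ι η α : Type}
    [LinearOrder ι] [LinearOrder η] (b : ι → α → M) (Lc : η → Set ι) (a : η → α → M)
    (S : Set η) : Prop :=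
  ∀ (N : ℕ) (f g : Fin N → ι ⊕ η),
    (∀ x y : Fin N, x < y → insLT Lc (f x) (f y)) →
    (∀ x y : Fin N, x < y → insLT Lc (g x) (g y)) →
    (∀ x e, f x = Sum.inr e → e ∈ S) → (∀ x e, g x = Sum.inr e → e ∈ S) →
    EqTp L A (tupcat fun j => Sum.elim b a (f j)) (tupcat fun j => Sum.elim b a (g j))

/-- The left part of the `t`-th cut of the partition `part`. -/
def cutSet {ι : Type} [LinearOrder ι] {n : ℕ} (part : ι → Fin (n + 1)) (t : Fin n) : Set ι :=
  {i | part i ≤ t.castSucc}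

/-- `part` is a Dedekind partition: a monotone surjection onto `Fin (n+1)` all of whose
`n` cuts are Dedekind. -/
def IsDedekindPartition {ι : Type} [LinearOrder ι] {n : ℕ} (part : ι → Fin (n + 1)) : Prop :=
  Monotone part ∧ (∀ t, ∃ i, part i = t) ∧ ∀ t : Fin n, IsDedekindCut (cutSet part t)

/-- The Dedekind partition `part` of the sequence `b` (indiscernible over `A`) is `m`-distal:
if every `m`-element subset of `(a 0, …, a (n-1))` inserts indiscernibly over `A` at the cuts,
then the whole tuple inserts. -/
def MDistalPartition (L : FirstOrder.Language) [L.Structure M] (A : Set M) {ι α : Type}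
    [LinearOrder ι] {n : ℕ} (b : ι → α → M) (part : ι → Fin (n + 1)) (m : ℕ) : Prop :=
  ∀ a : Fin n → α → M,
    (∀ S : Set (Fin n), S.ncard = m → InsertsInd L A b (cutSet part) a S) →
    InsertsInd L A b (cutSet part) a Set.univ

/-- The limit type `lim(c₀, …, c_{n-1})` of the cuts of the partition `part`, as a type
in `n` tuple-variables: formulas satisfied by all tuples close enough to the cuts. -/
def limCutTp (L : FirstOrder.Language) [L.Structure M] {ι α : Type} [LinearOrder ι] {n : ℕ}
    (b : ι → α → M) (part : ι → Fin (n + 1)) : PType L M (Fin n × α) :=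
  {x | ∃ lo hi : Fin n → ι,
    (∀ t, lo t ∈ cutSet part t) ∧ (∀ t, hi t ∉ cutSet part t) ∧
    ∀ it : Fin n → ι, (∀ t, lo t < it t ∧ it t < hi t) →
      x.2.1.Realize (Sum.elim (fun v => b (it v.1) v.2) x.2.2)}

/-- Two sequences have the same EM-type (over `∅`). -/
def SameEM (L : FirstOrder.Language) [L.Structure M] {ι κι α : Type} [LinearOrder ι]
    [LinearOrder κι] (b : ι → α → M) (c : κι → α → M) : Prop :=
  ∀ (N : ℕ) (f : Fin N → ι) (g : Fin N → κι), StrictMono f → StrictMono g →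
    EqTp L ∅ (tupcat fun j => b (f j)) (tupcat fun j => c (g j))

/-- The complete EM-type of the indiscernible sequence `b` is `(n, m)`-distal: every Dedekind
partition with `n` cuts of every sequence with the same EM-type is `m`-distal. -/
def EMdistalNM (L : FirstOrder.Language) [L.Structure M] {ι α : Type} [LinearOrder ι]
    (b : ι → α → M) (n m : ℕ) : Prop :=
  ∀ (κι : Type) [LinearOrder κι] (c : κι → α → M), SameEM L b c →
    ∀ part : κι → Fin (n + 1), IsDedekindPartition part → MDistalPartition L ∅ c part m

/-- The index of an `(m+1)`-skeleton: `ω + (ω* + ω) + ⋯ + (ω* + ω) + ω*` with `m` middle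
pieces of type `ω* + ω ≅ ℤ`. -/
abbrev SkelIdx (m : ℕ) : Type := (ℕ ⊕ₗ Lex (Fin m × ℤ)) ⊕ₗ ℕᵒᵈ

/-- The canonical partition of the skeleton index into its `m + 2` pieces. -/
def skelPart (m : ℕ) : SkelIdx m → Fin (m + 2) := fun x =>
  match ofLex x with
  | Sum.inl y =>
    match ofLex y with
    | Sum.inl _ => 0
    | Sum.inr tz => ((ofLex tz).1.succ).castSucc
  | Sum.inr _ => Fin.last (m + 1)

/-- The theory of `M`, with parameters for `A` named, is `m`-distal: every Dedekind
partition with `m + 1` cuts of every sequence indiscernible over `A` is `m`-distal over `A`. -/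
def TheoryMDistalOver (L : FirstOrder.Language) (M : Type) [L.Structure M] (A : Set M)
    (m : ℕ) : Prop :=
  ∀ (ι α : Type) [LinearOrder ι] (b : ι → α → M), indiscOver L A b →
    ∀ part : ι → Fin (m + 2), IsDedekindPartition part → MDistalPartition L A b part m

/-- `T = Th(M)` is stable: every indiscernible sequence is totally indiscernible. -/
def TotallyIndisc (L : FirstOrder.Language) (M : Type) [L.Structure M] : Prop :=
  ∀ (ι α : Type) [LinearOrder ι] (b : ι → α → M), indiscOver L ∅ b →
    ∀ (N : ℕ) (f g : Fin N → ι), Function.Injective f → Function.Injective g →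
      EqTp L ∅ (tupcat fun j => b (f j)) (tupcat fun j => b (g j))

/-- `T = Th(M)` is strongly `1`-distal. -/
def StronglyOneDistal (L : FirstOrder.Language) (M : Type) [L.Structure M] : Prop :=
  ∀ (ι α : Type) [LinearOrder ι] (b : ι → α → M) (c : Set ι), IsDedekindCut c →
    ∀ (D : Set M) (a : α → M), indiscOver L D b →
      InsertsInd L ∅ b (fun _ : PUnit => c) (fun _ => a) Set.univ →
      InsertsInd L D b (fun _ : PUnit => c) (fun _ => a) Set.univ

/-- The language with a single `n`-ary relation symbol. -/
def hyperLang (n : ℕ) : FirstOrder.Language where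
  Functions := fun _ => Empty
  Relations := fun k => PLift (k = n)

/-- The edge relation of a `hyperLang n`-structure. -/
def Edge {n : ℕ} {M : Type} [S : (hyperLang n).Structure M] (v : Fin n → M) : Prop :=
  Structure.RelMap (L := hyperLang n) (⟨rfl⟩ : (hyperLang n).Relations n) v

/-- `M` is a generic `(n+2)`-uniform hypergraph: an infinite `(n+2)`-uniform hypergraph
satisfying all extension axioms `φ_{s,t}`. -/
def IsGenericHypergraph (n : ℕ) (M : Type) [S : (hyperLang (n + 2)).Structure M] : Prop :=
  Infinite M ∧
  (∀ (v : Fin (n + 2) → M) (σ : Equiv.Perm (Fin (n + 2))), Edge v → Edge (v ∘ σ)) ∧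
  (∀ v : Fin (n + 2) → M, Edge v → Function.Injective v) ∧
  ∀ (s t : ℕ) (A : Fin s → Fin (n + 1) → M) (B : Fin t → Fin (n + 1) → M),
    (∀ i, Function.Injective (A i)) → (∀ j, Function.Injective (B j)) →
    (∀ i j, i ≠ j → Set.range (A i) ≠ Set.range (A j)) →
    (∀ i j, i ≠ j → Set.range (B i) ≠ Set.range (B j)) →
    (∀ i j, Set.range (A i) ≠ Set.range (B j)) →
    ∃ x : M, (∀ i, Edge (Fin.snoc (A i) x)) ∧ ∀ j, ¬ Edge (Fin.snoc (B j) x)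

variable {M : Type}

/-- The unique `A`-invariant global extension of a type `q` over the saturated model `S`. -/
def globExtT (L : FirstOrder.Language) [L.Structure M] (A S : Set M) {β : Type}
    (q : PType L M β) : PType L M β :=
  {x | ∀ d' : Fin x.1 → M, (∀ i, d' i ∈ S) → EqTp L A x.2.2 d' → ⟨x.1, x.2.1, d'⟩ ∈ q}

/-- The product `p ⊗ q` (resolved left to right) of a type `p` with an `A`-invariant type `q`
over the saturated model `S`: `φ(x, y, d) ∈ p ⊗ q` iff for every `a` realizing the restriction
of `p` to `A ∪ d`, the formula `φ(a, y, d)` lies in the `A`-invariant global extension of `q`. -/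
def prodT (L : FirstOrder.Language) [L.Structure M] (A S : Set M) {na nb : ℕ}
    (p : PType L M (Fin na)) (q : PType L M (Fin nb)) : PType L M (Fin na ⊕ Fin nb) :=
  {x | ∀ a : Fin na → M, realizes a (restrictParams (A ∪ Set.range x.2.2) p) →
    ⟨x.1 + na,
      x.2.1.relabel (Sum.elim
        (Sum.elim (fun i : Fin na => Sum.inr (Fin.natAdd x.1 i)) Sum.inl)
        (fun j : Fin x.1 => Sum.inr (Fin.castAdd na j))),
      Fin.append x.2.2 a⟩ ∈ globExtT L A S q}

/-- A Dedekind partition with `n` cuts of a sequence with the same EM-type as `b`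
which is `m`-distal. -/
structure DistalWitness (L : FirstOrder.Language) (M : Type) [L.Structure M] {ι α : Type}
    [LinearOrder ι] (b : ι → α → M) (n m : ℕ) : Type 1 where
  κι : Type
  [inst : LinearOrder κι]
  c : κι → α → M
  part : κι → Fin (n + 1)
  same : SameEM L b c
  ded : IsDedekindPartition part
  dist : MDistalPartition L ∅ c part m

/-- Realization of a formula only depends on the values of the valuation on the free
variable finset. -/
lemma realize_congr_freeVar {L : FirstOrder.Language} [L.Structure M] {β : Type}
    [DecidableEq β] (θ : L.Formula β) (v w : β → M)
    (h : ∀ x ∈ BoundedFormula.freeVarFinset θ, v x = w x) :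
    θ.Realize v ↔ θ.Realize w := by
  have hv := BoundedFormula.realize_restrictFreeVar' (M := M) (φ := θ)
    (s := ↑(BoundedFormula.freeVarFinset θ)) Set.Subset.rfl (v := v) (xs := default)
  have hw := BoundedFormula.realize_restrictFreeVar' (M := M) (φ := θ)
    (s := ↑(BoundedFormula.freeVarFinset θ)) Set.Subset.rfl (v := w) (xs := default)
  have hvw : v ∘ (Subtype.val : ↥(↑(BoundedFormula.freeVarFinset θ) : Set β) → β)
      = w ∘ Subtype.val := funext fun x => h x.1 (Finset.mem_coe.mp x.2)
  rw [Formula.Realize, ← hv, Formula.Realize, ← hw, hvw]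

/-- For a quantifier-free formula, the realization is determined by the realizations of
atomic formulas. -/
lemma qf_congr {L : FirstOrder.Language} [L.Structure M] {β : Type} {ψ : L.Formula β}
    (hqf : BoundedFormula.IsQF ψ) (v w : β → M)
    (hat : ∀ θ : L.Formula β, BoundedFormula.IsAtomic θ → (θ.Realize v ↔ θ.Realize w)) :
    ψ.Realize v ↔ ψ.Realize w := by
  induction hqf with
  | falsum => exact Iff.rfl
  | of_isAtomic h => exact hat _ h
  | imp h1 h2 ih1 ih2 => exact imp_congr ih1 ih2

/-- Any set with a "no maximum" property admits arbitrarily long strictly monotone chains. -/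
lemma exists_chain {ι : Type} [LinearOrder ι] {c : Set ι} (hne : c.Nonempty)
    (hstep : ∀ i ∈ c, ∃ j ∈ c, i < j) (N : ℕ) : ∃ h : Fin N → ι, StrictMono h := by
  obtain ⟨i0, hi0⟩ := hne
  choose nxt h1 h2 using hstep
  let u : ℕ → {x : ι // x ∈ c} := fun n =>
    Nat.rec ⟨i0, hi0⟩ (fun _ p => ⟨nxt p.1 p.2, h1 p.1 p.2⟩) n
  have hu : StrictMono fun n => (u n).1 :=
    strictMono_nat_of_lt_succ (fun n => h2 (u n).1 (u n).2)
  exact ⟨fun i => (u i).1, fun x y hxy => hu hxy⟩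

/-- Any short tuple's `Sum.inr`-entries can be covered by a set of size exactly `m`. -/
lemma exists_superset_ncard {ι : Type} {m K : ℕ} (hK : K ≤ m) (f : Fin K → ι ⊕ Fin (m + 1)) :
    ∃ S : Set (Fin (m + 1)), S.ncard = m ∧ ∀ i e, f i = Sum.inr e → e ∈ S := by
  classical
  let g : Fin K → Fin (m + 1) := fun i => Sum.elim (fun _ => (0 : Fin (m + 1))) id (f i)
  let T : Finset (Fin (m + 1)) := Finset.image g Finset.univ
  have hT : T.card ≤ m := le_trans (le_trans Finset.card_image_le (by simp)) hK
  obtain ⟨u, hTu, -, hucard⟩ := Finset.exists_subsuperset_card_eq (T.subset_univ) hT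
    (by simp)
  refine ⟨↑u, by simpa [Set.ncard_coe_finset] using hucard, fun i e he => ?_⟩
  have : g i = e := by simp [g, he]
  exact hTu (this ▸ Finset.mem_image_of_mem g (Finset.mem_univ i))

/-- a theory with quantifier elimination in a language whose atomic formulas
have at most `m` free variables is `m`-distal. -/
theorem stmt14 (L : FirstOrder.Language) (M : Type) [L.Structure M] (m : ℕ) (hm : 0 < m)
    (hqe : ∀ (β : Type) (φ : L.Formula β), ∃ ψ : L.Formula β,
      BoundedFormula.IsQF ψ ∧ ∀ v : β → M, φ.Realize v ↔ ψ.Realize v)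
    (harity : ∀ (β : Type) [DecidableEq β] (φ : L.Formula β),
      BoundedFormula.IsAtomic φ → (BoundedFormula.freeVarFinset φ).card ≤ m) :
    TheoryMDistalOver L M ∅ m := by
  classical
  intro ι α _inst b _hind part hpart a hsub
  intro N f g hf hg _ _
  -- a purely-`ι` strictly increasing sequence of length `N`
  obtain ⟨ch, hch⟩ := exists_chain (hpart.2.2 0).1 (hpart.2.2 0).2.2.2.1 N
  intro k d hd φ
  cases k with
  | succ k => exact absurd (hd 0) (Set.notMem_empty _)
  | zero =>
    obtain ⟨ψ, hψqf, hψ⟩ := hqe _ φ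
    refine Iff.trans (hψ _) (Iff.trans ?_ (hψ _).symm)
    refine qf_congr hψqf _ _ (fun θ hθ => ?_)
    -- atomic case
    set F := BoundedFormula.freeVarFinset θ with hFdef
    have hF : F.card ≤ m := harity _ θ hθ
    set π : ((Fin N × α) ⊕ Fin 0) → Fin N := Sum.elim Prod.fst Fin.elim0 with hπdef
    set J : Finset (Fin N) := F.image π with hJdef
    have hK : J.card ≤ m := le_trans Finset.card_image_le hF
    by_cases hJ : J = ∅
    · -- no free variables at all
      refine realize_congr_freeVar θ _ _ (fun x hx => ?_)
      exfalso
      match x with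
      | Sum.inl p =>
        exact (Finset.eq_empty_iff_forall_notMem.mp hJ p.1)
          (Finset.mem_image_of_mem π hx)
      | Sum.inr i => exact i.elim0
    · obtain ⟨j₀, hj₀⟩ := Finset.nonempty_iff_ne_empty.mpr hJ
      set em : Fin J.card ↪o Fin N := J.orderEmbOfFin rfl with hemdef
      have hsurj : ∀ j ∈ J, ∃ i, em i = j := fun j hj => by
        have : j ∈ Set.range em := by
          rw [J.range_orderEmbOfFin rfl]; exact Finset.mem_coe.mpr hj
        exact this
      choose ind hind using hsurj
      set r : ((Fin N × α) ⊕ Fin 0) → ((Fin J.card × α) ⊕ Fin 0) := fun x =>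
        match x with
        | Sum.inl js => Sum.inl (if h : js.1 ∈ J then ind js.1 h else ind j₀ hj₀, js.2)
        | Sum.inr i => i.elim0
        with hrdef
      -- transfer realization through the relabeling `r`
      have key : ∀ fw : Fin N → ι ⊕ Fin (m + 1),
          (θ.Realize (Sum.elim (tupcat fun j => Sum.elim b a (fw j)) d) ↔
            (θ.relabel r).Realize
              (Sum.elim (tupcat fun i : Fin J.card => Sum.elim b a (fw (em i))) d)) := by
        intro fw
        rw [Formula.realize_relabel]
        refine realize_congr_freeVar θ _ _ (fun x hx => ?_)
        match x with
        | Sum.inl js =>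
          obtain ⟨j, s⟩ := js
          have hj : j ∈ J := Finset.mem_image_of_mem π hx
          show Sum.elim b a (fw j) s = _
          simp only [Function.comp_apply, hrdef, hj, dif_pos]
          show _ = Sum.elim b a (fw (em (ind j hj))) s
          rw [hind j hj]
        | Sum.inr i => exact i.elim0
      -- compare an arbitrary inserting sequence with the pure-`ι` sequence `ch`
      have main : ∀ fw : Fin N → ι ⊕ Fin (m + 1),
          (∀ x y : Fin N, x < y → insLT (cutSet part) (fw x) (fw y)) →
          (θ.Realize (Sum.elim (tupcat fun j => Sum.elim b a (fw j)) d) ↔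
            θ.Realize (Sum.elim (tupcat fun j => Sum.elim b a (Sum.inl (ch j))) d)) := by
        intro fw hfw
        obtain ⟨S, hScard, hSmem⟩ := exists_superset_ncard hK (fun i => fw (em i))
        have hins := hsub S hScard J.card (fun i => fw (em i))
          (fun i => Sum.inl (ch (em i)))
          (fun x y hxy => hfw _ _ (em.strictMono hxy))
          (fun x y hxy => hch (em.strictMono hxy))
          (fun x e he => hSmem x e he)
          (fun x e he => (Sum.inl_ne_inr he).elim)
        have heq := hins 0 d (fun i => i.elim0) (θ.relabel r)
        rw [key fw, key (fun j => Sum.inl (ch j))]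
        exact heq
      exact Iff.trans (main f hf) (main g hg).symm

end DR
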